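/- Direction separation implies the Wolff axiom up to a constant: there exists an absolute constant C > 0 such that for all 0 < δ < 1, every finite direction-separated family 𝕋 of δ-tubes in ℝ³ satisfies #{T ∈ 𝕋 : T ⊆ R} ≤ C · δ^{−2} · |R| for every rectangular prism R ⊆ ℝ³. -/

import Mathlib

open MeasureTheory
open scoped ENNReal

set_option maxHeartbeats 2000000

/-- The `δ`-tube `T_{ω,a}`: the closed `δ`-neighborhood of the unit line segment
`ℓ_{ω,a} = {a + t•ω : t ∈ [0,1]}`. -/
def deltaTube (δ : ℝ) (ω a : EuclideanSpace ℝ (Fin 3)) : Set (EuclideanSpace ℝ (Fin 3)) :=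
  Metric.cthickening δ ((fun t : ℝ => a + t • ω) '' Set.Icc 0 1)

/-- A rectangular prism in `ℝ³`: a set of the form
`{x : |⟨x − c, eᵢ⟩| ≤ rᵢ, i = 1,2,3}` for some centre `c`, orthonormal basis `(e₁,e₂,e₃)`
and side half-lengths `rᵢ > 0`. -/
def IsRectPrism (R : Set (EuclideanSpace ℝ (Fin 3))) : Prop :=
  ∃ (c : EuclideanSpace ℝ (Fin 3)) (e : Fin 3 → EuclideanSpace ℝ (Fin 3)) (r : Fin 3 → ℝ),
    Orthonormal ℝ e ∧ (∀ i, 0 < r i) ∧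
    R = {x | ∀ i, |(inner ℝ (x - c) (e i) : ℝ)| ≤ r i}

/-- The volume of a rectangular prism with half-lengths `r i` is `∏ i, 2 * r i`. -/
lemma volume_rect_prism (c : EuclideanSpace ℝ (Fin 3)) (e : Fin 3 → EuclideanSpace ℝ (Fin 3))
    (r : Fin 3 → ℝ) (he : Orthonormal ℝ e) :
    volume {x : EuclideanSpace ℝ (Fin 3) | ∀ i, |(inner ℝ (x - c) (e i) : ℝ)| ≤ r i}
      = ∏ i, ENNReal.ofReal (2 * r i) := by
  have hcard : Fintype.card (Fin 3) = Module.finrank ℝ (EuclideanSpace ℝ (Fin 3)) := by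
    simp [finrank_euclideanSpace_fin]
  let b : OrthonormalBasis (Fin 3) ℝ (EuclideanSpace ℝ (Fin 3)) :=
    OrthonormalBasis.mk he
      (he.linearIndependent.span_eq_top_of_card_eq_finrank hcard).ge
  have hb : ⇑b = e := OrthonormalBasis.coe_mk _ _
  set box : Set (EuclideanSpace ℝ (Fin 3)) :=
    (MeasurableEquiv.toLp 2 (Fin 3 → ℝ)).symm ⁻¹' (Set.univ.pi fun i => Set.Icc (-(r i)) (r i))
    with hbox
  have hmeas : MeasurableSet box :=
    (MeasurableEquiv.toLp 2 (Fin 3 → ℝ)).symm.measurable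
      (MeasurableSet.univ_pi fun i => measurableSet_Icc)
  have hvolbox : volume box = ∏ i, ENNReal.ofReal (2 * r i) := by
    rw [hbox, (EuclideanSpace.volume_preserving_symm_measurableEquiv_toLp (Fin 3)).measure_preimage
      ((MeasurableSet.univ_pi fun i => measurableSet_Icc).nullMeasurableSet),
      volume_pi_pi]
    congr 1
    ext i
    rw [Real.volume_Icc]
    ring_nf
  have hpre : {x : EuclideanSpace ℝ (Fin 3) | ∀ i, |(inner ℝ (x - c) (e i) : ℝ)| ≤ r i}
      = (fun x => b.repr (x - c)) ⁻¹' box := by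
    ext x
    simp only [Set.mem_setOf_eq, Set.mem_preimage, hbox, Set.mem_pi, Set.mem_univ, true_implies,
      Set.mem_Icc, MeasurableEquiv.coe_toLp_symm,
      b.repr_apply_apply, hb]
    constructor
    · intro h i
      have := abs_le.mp (h i)
      rw [real_inner_comm] at this
      exact this
    · intro h i
      rw [real_inner_comm]
      exact abs_le.mpr (h i)
  rw [hpre]
  have hmp : MeasurePreserving (fun x : EuclideanSpace ℝ (Fin 3) => b.repr (x - c))
      volume volume :=
    (b.measurePreserving_repr).comp (measurePreserving_sub_right volume c)
  rw [hmp.measure_preimage hmeas.nullMeasurableSet, hvolbox]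

/-- Counting separated points in a planar rectangle via a grid. -/
lemma grid_count {m : ℕ} (F : Set (Fin m)) (ε s1 s2 : ℝ) (hε : 0 < ε)
    (hs1 : ε ≤ s1) (hs2 : ε ≤ s2)
    (p1 p2 : Fin m → ℝ)
    (hb1 : ∀ i ∈ F, |p1 i| ≤ s1) (hb2 : ∀ i ∈ F, |p2 i| ≤ s2)
    (hsep : ∀ i ∈ F, ∀ j ∈ F, i ≠ j → ε ≤ |p1 i - p1 j| ∨ ε ≤ |p2 i - p2 j|) :
    (F.ncard : ℝ) ≤ 25 * (s1 / ε) * (s2 / ε) := by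
  classical
  set q : Fin m → ℤ × ℤ := fun i => (⌊p1 i / ε⌋, ⌊p2 i / ε⌋) with hq
  have hinj : Set.InjOn q F := by
    intro i hi j hj hqe
    by_contra hne
    have key : ∀ (p : Fin m → ℝ), ⌊p i / ε⌋ = ⌊p j / ε⌋ → |p i - p j| < ε := by
      intro p hfl
      have h1 : |p i / ε - p j / ε| < 1 := Int.abs_sub_lt_one_of_floor_eq_floor hfl
      have h2 : p i - p j = ε * (p i / ε - p j / ε) := by field_simp
      rw [h2, abs_mul, abs_of_pos hε]
      nlinarith [abs_nonneg (p i / ε - p j / ε)]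
    rcases hsep i hi j hj hne with h | h
    · exact absurd (key p1 (congrArg Prod.fst hqe)) (not_lt.mpr h)
    · exact absurd (key p2 (congrArg Prod.snd hqe)) (not_lt.mpr h)
  set G : Finset (ℤ × ℤ) :=
    Finset.Icc (-⌈s1 / ε⌉) ⌈s1 / ε⌉ ×ˢ Finset.Icc (-⌈s2 / ε⌉) ⌈s2 / ε⌉ with hG
  have hsub : q '' F ⊆ ↑G := by
    rintro _ ⟨i, hi, rfl⟩
    have key2 : ∀ (z s : ℝ), |z| ≤ s → ⌊z / ε⌋ ∈ Finset.Icc (-⌈s / ε⌉) ⌈s / ε⌉ := by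
      intro z s hp
      obtain ⟨hl, hu⟩ := abs_le.mp hp
      rw [Finset.mem_Icc]
      refine ⟨?_, ?_⟩
      · rw [← Int.floor_neg, ← neg_div]
        exact Int.floor_le_floor (by gcongr)
      · exact (Int.floor_le_ceil _).trans (Int.ceil_le_ceil (by gcongr))
    rw [hG, Finset.coe_product]
    exact ⟨key2 _ _ (hb1 i hi), key2 _ _ (hb2 i hi)⟩
  have hcount : (F.ncard : ℝ) ≤ (G.card : ℝ) := by
    have : F.ncard ≤ G.card := by
      calc F.ncard = (q '' F).ncard := (Set.ncard_image_of_injOn hinj).symm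
        _ ≤ (↑G : Set (ℤ × ℤ)).ncard := Set.ncard_le_ncard hsub G.finite_toSet
        _ = G.card := Set.ncard_coe_finset G
    exact_mod_cast this
  have cardbound : ∀ s : ℝ, ε ≤ s →
      ((Finset.Icc (-⌈s / ε⌉) ⌈s / ε⌉).card : ℝ) ≤ 5 * (s / ε) := by
    intro s hs
    have hx : (1 : ℝ) ≤ s / ε := (one_le_div hε).mpr hs
    have hc1 : (1 : ℤ) ≤ ⌈s / ε⌉ := by exact_mod_cast Int.one_le_ceil_iff.mpr (by linarith)
    have hcle : (⌈s / ε⌉ : ℝ) ≤ s / ε + 1 := le_of_lt (Int.ceil_lt_add_one _)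
    rw [Int.card_Icc]
    have hnn : (0 : ℤ) ≤ ⌈s / ε⌉ + 1 - -⌈s / ε⌉ := by linarith
    rw [show (((⌈s / ε⌉ + 1 - -⌈s / ε⌉).toNat : ℕ) : ℝ)
        = ((⌈s / ε⌉ + 1 - -⌈s / ε⌉ : ℤ) : ℝ) by
      rw [← Int.cast_natCast, Int.toNat_of_nonneg hnn]]
    push_cast
    linarith
  calc (F.ncard : ℝ) ≤ (G.card : ℝ) := hcount
    _ = ((Finset.Icc (-⌈s1 / ε⌉) ⌈s1 / ε⌉).card : ℝ)
        * ((Finset.Icc (-⌈s2 / ε⌉) ⌈s2 / ε⌉).card : ℝ) := by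
        rw [hG, Finset.card_product]; push_cast; ring
    _ ≤ (5 * (s1 / ε)) * (5 * (s2 / ε)) := by
        have h1 : (0:ℝ) ≤ 5 * (s1 / ε) := by
          have := div_nonneg (hε.le.trans hs1) hε.le; linarith
        exact mul_le_mul (cardbound s1 hs1) (cardbound s2 hs2) (Nat.cast_nonneg _) h1
    _ = 25 * (s1 / ε) * (s2 / ε) := by ring

/-- Counting the tubes in one of the six classes determined by the large coordinate of the
direction vector. -/
lemma class_count {m : ℕ} (δ : ℝ) (hδ : 0 < δ)
    (u : Fin m → Fin 3 → ℝ) (r : Fin 3 → ℝ) (hr : ∀ l, 0 < r l)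
    (k l1 l2 : Fin 3) (F : Set (Fin m))
    (hsum : ∀ i ∈ F, (u i k)^2 + (u i l1)^2 + (u i l2)^2 = 1)
    (hsep : ∀ i ∈ F, ∀ j ∈ F, i ≠ j →
       δ^2 ≤ (u i k - u j k)^2 + (u i l1 - u j l1)^2 + (u i l2 - u j l2)^2)
    (hb : ∀ i ∈ F, ∀ l, |u i l| + 2*δ ≤ 2 * r l)
    (hhalf : ∀ i ∈ F, 1/2 ≤ u i k) :
    (F.ncard : ℝ) ≤ 14400 * (r k * (r l1 * r l2)) / δ^2 := by
  rcases F.eq_empty_or_nonempty with rfl | ⟨i0, hi0⟩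
  · simp only [Set.ncard_empty, Nat.cast_zero]
    have h1 := hr k; have h2 := hr l1; have h3 := hr l2
    positivity
  have hε : (0:ℝ) < δ / 6 := by linarith
  have hδ2 : (0:ℝ) < δ^2 := by positivity
  have hrk : 1/4 ≤ r k := by
    have h1 := hb i0 hi0 k
    have h2 := hhalf i0 hi0
    have h3 : 1/2 ≤ |u i0 k| := h2.trans (le_abs_self _)
    linarith
  have hs1 : δ / 6 ≤ 2 * r l1 := by
    have := hb i0 hi0 l1; have := abs_nonneg (u i0 l1); linarith
  have hs2 : δ / 6 ≤ 2 * r l2 := by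
    have := hb i0 hi0 l2; have := abs_nonneg (u i0 l2); linarith
  have hgrid := grid_count F (δ/6) (2 * r l1) (2 * r l2) hε hs1 hs2
    (fun i => u i l1) (fun i => u i l2)
    (fun i hi => by have := hb i hi l1; linarith)
    (fun i hi => by have := hb i hi l2; linarith)
    ?_
  · have e : 25 * ((2 * r l1) / (δ/6)) * ((2 * r l2) / (δ/6))
        = 3600 * (r l1 * r l2) / δ^2 := by
      field_simp
      ring
    rw [e] at hgrid
    refine hgrid.trans ?_
    rw [div_le_div_iff₀ hδ2 hδ2]
    nlinarith [mul_nonneg (mul_pos (mul_pos (hr l1) (hr l2)) hδ2).le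
      (show (0:ℝ) ≤ r k - 1/4 by linarith)]
  · intro i hi j hj hne
    by_contra hcon
    push_neg at hcon
    obtain ⟨hc1, hc2⟩ := hcon
    set A := u i k; set B := u j k
    set a1 := u i l1; set b1 := u j l1
    set a2 := u i l2; set b2 := u j l2
    have hsi := hsum i hi
    have hsj := hsum j hj
    have hAi : 1/2 ≤ A := hhalf i hi
    have hBj : 1/2 ≤ B := hhalf j hj
    have ha1 : |a1| ≤ 1 := by nlinarith [sq_nonneg a2, sq_nonneg A, sq_abs a1, abs_nonneg a1]
    have hb1 : |b1| ≤ 1 := by nlinarith [sq_nonneg b2, sq_nonneg B, sq_abs b1, abs_nonneg b1]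
    have ha2 : |a2| ≤ 1 := by nlinarith [sq_nonneg a1, sq_nonneg A, sq_abs a2, abs_nonneg a2]
    have hb2 : |b2| ≤ 1 := by nlinarith [sq_nonneg b1, sq_nonneg B, sq_abs b2, abs_nonneg b2]
    have hid : (A - B) * (A + B) = (b1 - a1) * (b1 + a1) + (b2 - a2) * (b2 + a2) := by
      linear_combination hsi - hsj
    have habs : |A - B| * (A + B) ≤ |b1 - a1| * 2 + |b2 - a2| * 2 := by
      rw [← abs_of_pos (show (0:ℝ) < A + B by linarith), ← abs_mul, hid]
      calc |(b1 - a1) * (b1 + a1) + (b2 - a2) * (b2 + a2)|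
          ≤ |(b1 - a1) * (b1 + a1)| + |(b2 - a2) * (b2 + a2)| := abs_add_le _ _
        _ = |b1 - a1| * |b1 + a1| + |b2 - a2| * |b2 + a2| := by rw [abs_mul, abs_mul]
        _ ≤ |b1 - a1| * 2 + |b2 - a2| * 2 := by
            have h1 : |b1 + a1| ≤ 2 := (abs_add_le _ _).trans (by linarith)
            have h2 : |b2 + a2| ≤ 2 := (abs_add_le _ _).trans (by linarith)
            exact add_le_add (mul_le_mul_of_nonneg_left h1 (abs_nonneg _))
              (mul_le_mul_of_nonneg_left h2 (abs_nonneg _))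
    have hAB : |A - B| ≤ |b1 - a1| * 2 + |b2 - a2| * 2 := by
      nlinarith [mul_nonneg (abs_nonneg (A - B)) (show (0:ℝ) ≤ A + B - 1 by linarith)]
    rw [abs_sub_comm b1 a1, abs_sub_comm b2 a2] at hAB
    have hABsq : (A - B)^2 ≤ (|a1 - b1| * 2 + |a2 - b2| * 2)^2 := by
      rw [← sq_abs (A - B)]
      exact pow_le_pow_left₀ (abs_nonneg _) hAB 2
    have hds : δ^2 ≤ (A - B)^2 + (a1 - b1)^2 + (a2 - b2)^2 := hsep i hi j hj hne
    nlinarith [hABsq, hds, sq_abs (a1 - b1), sq_abs (a2 - b2),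
      abs_nonneg (a1 - b1), abs_nonneg (a2 - b2),
      mul_lt_mul'' hc1 hc2 (abs_nonneg _) (abs_nonneg _),
      mul_lt_mul'' hc1 hc1 (abs_nonneg _) (abs_nonneg _),
      mul_lt_mul'' hc2 hc2 (abs_nonneg _) (abs_nonneg _)]

lemma euclidean_norm_sq_fin3 (v : EuclideanSpace ℝ (Fin 3)) : ‖v‖^2 = ∑ k, (v k)^2 := by
  rw [EuclideanSpace.norm_eq, Real.sq_sqrt (Finset.sum_nonneg fun _ _ => sq_nonneg _)]
  simp [sq_abs]

/-- **Direction separation implies the Wolff axiom up to a constant**: there is an absolute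
constant `C > 0` such that for all `0 < δ < 1`, every finite direction-separated family of
`δ`-tubes in `ℝ³` satisfies `#{T ∈ 𝕋 : T ⊆ R} ≤ C δ⁻² |R|` for every rectangular prism `R`. -/
theorem direction_separated_wolff_axiom :
    ∃ C : ℝ, 0 < C ∧
      ∀ δ : ℝ, 0 < δ → δ < 1 →
        ∀ (m : ℕ) (ω a : Fin m → EuclideanSpace ℝ (Fin 3)),
          (∀ i, ‖ω i‖ = 1) →
          (∀ i j, i ≠ j → δ ≤ ‖ω i - ω j‖) →
          ∀ R : Set (EuclideanSpace ℝ (Fin 3)), IsRectPrism R →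
            (({i : Fin m | deltaTube δ (ω i) (a i) ⊆ R}.ncard : ℝ≥0∞)
              ≤ ENNReal.ofReal (C * δ⁻¹ ^ 2) * volume R) := by
  refine ⟨100000, by norm_num, ?_⟩
  intro δ hδ hδ1 m ω a hω hdir R hR
  obtain ⟨c, e, r, he, hr, rfl⟩ := hR
  have hvol := volume_rect_prism c e r he
  set S := {i : Fin m |
    deltaTube δ (ω i) (a i) ⊆ {x | ∀ i, |(inner ℝ (x - c) (e i) : ℝ)| ≤ r i}} with hSdef
  -- the key geometric estimate
  have hkey : ∀ i ∈ S, ∀ k, |(inner ℝ (ω i) (e k) : ℝ)| + 2*δ ≤ 2 * r k := by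
    intro i hi k
    have hne : ‖e k‖ = 1 := he.1 k
    set w : ℝ := inner ℝ (ω i) (e k) with hw
    set σ : ℝ := if 0 ≤ w then 1 else -1 with hσdef
    have hσ : |σ| = 1 := by rw [hσdef]; split <;> simp
    have hsmul : ‖(σ * δ) • e k‖ = δ := by
      rw [norm_smul, hne, mul_one, Real.norm_eq_abs, abs_mul, hσ, one_mul, abs_of_pos hδ]
    have hP : a i + ω i + (σ*δ) • e k ∈ deltaTube δ (ω i) (a i) := by
      apply Metric.mem_cthickening_of_dist_le _ (a i + ω i) δ
        ((fun t : ℝ => a i + t • ω i) '' Set.Icc 0 1) ⟨1, by norm_num, by simp⟩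
      rw [dist_eq_norm, show a i + ω i + (σ*δ) • e k - (a i + ω i) = (σ*δ) • e k by abel, hsmul]
    have hQ : a i - (σ*δ) • e k ∈ deltaTube δ (ω i) (a i) := by
      apply Metric.mem_cthickening_of_dist_le _ (a i) δ
        ((fun t : ℝ => a i + t • ω i) '' Set.Icc 0 1) ⟨0, by norm_num, by simp⟩
      rw [dist_eq_norm, show a i - (σ*δ) • e k - a i = -((σ*δ) • e k) by abel, norm_neg, hsmul]
    have hee : (inner ℝ (e k) (e k) : ℝ) = 1 := by
      rw [real_inner_self_eq_norm_sq, hne]; norm_num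
    have h1 : |(inner ℝ (a i + ω i + (σ*δ) • e k - c) (e k) : ℝ)| ≤ r k := hi hP k
    have h2 : |(inner ℝ (a i - (σ*δ) • e k - c) (e k) : ℝ)| ≤ r k := hi hQ k
    have e1 : (inner ℝ (a i + ω i + (σ*δ) • e k - c) (e k) : ℝ)
        = inner ℝ (a i - c) (e k) + w + σ * δ := by
      rw [show a i + ω i + (σ*δ) • e k - c = ((a i - c) + ω i) + (σ*δ) • e k by abel,
        inner_add_left, inner_add_left, real_inner_smul_left, hee, hw]
      ring
    have e2 : (inner ℝ (a i - (σ*δ) • e k - c) (e k) : ℝ)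
        = inner ℝ (a i - c) (e k) - σ * δ := by
      rw [show a i - (σ*δ) • e k - c = (a i - c) + (-(σ*δ)) • e k by rw [neg_smul]; abel,
        inner_add_left, real_inner_smul_left, hee]
      ring
    rw [e1] at h1
    rw [e2] at h2
    obtain ⟨a1, a2⟩ := abs_le.mp h1
    obtain ⟨b1, b2⟩ := abs_le.mp h2
    rcases le_or_gt 0 w with hw0 | hw0
    · have hσ1 : σ = 1 := by rw [hσdef, if_pos hw0]
      rw [hσ1] at a1 a2 b1 b2
      rw [abs_of_nonneg hw0]
      linarith
    · have hσ1 : σ = -1 := by rw [hσdef, if_neg (not_le.mpr hw0)]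
      rw [hσ1] at a1 a2 b1 b2
      rw [abs_of_neg hw0]
      linarith
  -- coordinates of the directions
  have hcard : Fintype.card (Fin 3) = Module.finrank ℝ (EuclideanSpace ℝ (Fin 3)) := by
    simp [finrank_euclideanSpace_fin]
  let b : OrthonormalBasis (Fin 3) ℝ (EuclideanSpace ℝ (Fin 3)) :=
    OrthonormalBasis.mk he
      (he.linearIndependent.span_eq_top_of_card_eq_finrank hcard).ge
  have hbe : ⇑b = e := OrthonormalBasis.coe_mk _ _
  set u : Fin m → Fin 3 → ℝ := fun i k => b.repr (ω i) k with hu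
  have huinner : ∀ i k, u i k = inner ℝ (ω i) (e k) := by
    intro i k
    rw [hu]
    simp only [b.repr_apply_apply, hbe]
    exact real_inner_comm _ _
  have husum : ∀ i, (u i 0)^2 + (u i 1)^2 + (u i 2)^2 = 1 := by
    intro i
    have h1 : ‖b.repr (ω i)‖^2 = 1 := by
      rw [LinearIsometryEquiv.norm_map, hω i]; norm_num
    rw [euclidean_norm_sq_fin3, Fin.sum_univ_three] at h1
    exact h1
  have husep : ∀ i j, i ≠ j →
      δ^2 ≤ (u i 0 - u j 0)^2 + (u i 1 - u j 1)^2 + (u i 2 - u j 2)^2 := by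
    intro i j hne
    have h0 : δ ≤ ‖ω i - ω j‖ := hdir i j hne
    have h1 : ‖b.repr (ω i) - b.repr (ω j)‖^2 = ‖ω i - ω j‖^2 := by
      rw [← map_sub, LinearIsometryEquiv.norm_map]
    have h2 : δ^2 ≤ ‖ω i - ω j‖^2 := by nlinarith [norm_nonneg (ω i - ω j)]
    rw [← h1, euclidean_norm_sq_fin3, Fin.sum_univ_three] at h2
    simpa using h2
  have hbS : ∀ i ∈ S, ∀ l, |u i l| + 2*δ ≤ 2 * r l := by
    intro i hi l
    rw [huinner]
    exact hkey i hi l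
  -- the six classes
  set Cp : Fin 3 → Set (Fin m) := fun k => {i | i ∈ S ∧ 1/2 ≤ u i k} with hCp
  set Cn : Fin 3 → Set (Fin m) := fun k => {i | i ∈ S ∧ u i k ≤ -(1/2)} with hCn
  have hcover : S ⊆ (Cp 0 ∪ Cn 0) ∪ ((Cp 1 ∪ Cn 1) ∪ (Cp 2 ∪ Cn 2)) := by
    intro i hi
    have h3 : ∃ k, 1/3 ≤ (u i k)^2 := by
      by_contra hcon
      push_neg at hcon
      have := hcon 0; have := hcon 1; have := hcon 2
      have := husum i
      linarith
    obtain ⟨k, hk⟩ := h3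
    have hkk : 1/2 ≤ u i k ∨ u i k ≤ -(1/2) := by
      rcases le_or_gt 0 (u i k) with h | h
      · exact Or.inl (by nlinarith)
      · exact Or.inr (by nlinarith)
    fin_cases k
    · rcases hkk with h | h
      · exact Or.inl (Or.inl ⟨hi, h⟩)
      · exact Or.inl (Or.inr ⟨hi, h⟩)
    · rcases hkk with h | h
      · exact Or.inr (Or.inl (Or.inl ⟨hi, h⟩))
      · exact Or.inr (Or.inl (Or.inr ⟨hi, h⟩))
    · rcases hkk with h | h
      · exact Or.inr (Or.inr (Or.inl ⟨hi, h⟩))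
      · exact Or.inr (Or.inr (Or.inr ⟨hi, h⟩))
  set P : ℝ := r 0 * (r 1 * r 2) with hP
  have hδ2 : (0:ℝ) < δ^2 := by positivity
  -- bounds for the classes
  have hclass : ∀ (k l1 l2 : Fin 3),
      (∀ i, (u i k)^2 + (u i l1)^2 + (u i l2)^2 = 1) →
      (∀ i j, i ≠ j → δ^2 ≤ (u i k - u j k)^2 + (u i l1 - u j l1)^2 + (u i l2 - u j l2)^2) →
      ((Cp k).ncard : ℝ) ≤ 14400 * (r k * (r l1 * r l2)) / δ^2
        ∧ ((Cn k).ncard : ℝ) ≤ 14400 * (r k * (r l1 * r l2)) / δ^2 := by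
    intro k l1 l2 h1 h2
    have hsub1 : Cp k ⊆ S := fun i hi => hi.1
    have hsub2 : Cn k ⊆ S := fun i hi => hi.1
    constructor
    · exact class_count δ hδ u r hr k l1 l2 (Cp k)
        (fun i _ => h1 i) (fun i _ j _ hne => h2 i j hne)
        (fun i hi => hbS i (hsub1 hi)) (fun i hi => hi.2)
    · exact class_count δ hδ (fun i l => -(u i l)) r hr k l1 l2 (Cn k)
        (fun i _ => by have := h1 i; ring_nf; ring_nf at this; linarith)
        (fun i _ j _ hne => by have := h2 i j hne; ring_nf; ring_nf at this; linarith)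
        (fun i hi => fun l => by rw [abs_neg]; exact hbS i (hsub2 hi) l)
        (fun i hi => by have := hi.2; linarith)
  have hc0 := hclass 0 1 2 (fun i => husum i) (fun i j hne => husep i j hne)
  have hc1 := hclass 1 0 2 (fun i => by have := husum i; linarith)
    (fun i j hne => by have := husep i j hne; linarith)
  have hc2 := hclass 2 0 1 (fun i => by have := husum i; linarith)
    (fun i j hne => by have := husep i j hne; linarith)
  -- combine
  have hsum6 : (S.ncard : ℝ) ≤ 86400 * P / δ^2 := by
    have hmono : (S.ncard : ℕ)
        ≤ ((Cp 0 ∪ Cn 0) ∪ ((Cp 1 ∪ Cn 1) ∪ (Cp 2 ∪ Cn 2))).ncard :=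
      Set.ncard_le_ncard hcover (Set.toFinite _)
    have hadd : (((Cp 0 ∪ Cn 0) ∪ ((Cp 1 ∪ Cn 1) ∪ (Cp 2 ∪ Cn 2))).ncard : ℕ)
        ≤ (Cp 0).ncard + (Cn 0).ncard + ((Cp 1).ncard + (Cn 1).ncard
          + ((Cp 2).ncard + (Cn 2).ncard)) := by
      calc ((Cp 0 ∪ Cn 0) ∪ ((Cp 1 ∪ Cn 1) ∪ (Cp 2 ∪ Cn 2))).ncard
          ≤ (Cp 0 ∪ Cn 0).ncard + ((Cp 1 ∪ Cn 1) ∪ (Cp 2 ∪ Cn 2)).ncard :=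
            Set.ncard_union_le _ _
        _ ≤ (Cp 0 ∪ Cn 0).ncard + ((Cp 1 ∪ Cn 1).ncard + (Cp 2 ∪ Cn 2).ncard) :=
            Nat.add_le_add_left (Set.ncard_union_le _ _) _
        _ ≤ (Cp 0).ncard + (Cn 0).ncard + ((Cp 1).ncard + (Cn 1).ncard
            + ((Cp 2).ncard + (Cn 2).ncard)) := by
            have u0 := Set.ncard_union_le (Cp 0) (Cn 0)
            have u1 := Set.ncard_union_le (Cp 1) (Cn 1)
            have u2 := Set.ncard_union_le (Cp 2) (Cn 2)
            omega
    have hreal : (S.ncard : ℝ) ≤ ((Cp 0).ncard : ℝ) + ((Cn 0).ncard : ℝ)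
        + (((Cp 1).ncard : ℝ) + ((Cn 1).ncard : ℝ)
        + (((Cp 2).ncard : ℝ) + ((Cn 2).ncard : ℝ))) := by
      have := hmono.trans hadd
      exact_mod_cast this
    have e0 : 14400 * (r 0 * (r 1 * r 2)) / δ^2 = 14400 * P / δ^2 := by rw [hP]
    have e1 : 14400 * (r 1 * (r 0 * r 2)) / δ^2 = 14400 * P / δ^2 := by rw [hP]; ring_nf
    have e2 : 14400 * (r 2 * (r 0 * r 1)) / δ^2 = 14400 * P / δ^2 := by rw [hP]; ring_nf
    have A1 := hc0.1.trans (le_of_eq e0)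
    have A2 := hc0.2.trans (le_of_eq e0)
    have A3 := hc1.1.trans (le_of_eq e1)
    have A4 := hc1.2.trans (le_of_eq e1)
    have A5 := hc2.1.trans (le_of_eq e2)
    have A6 := hc2.2.trans (le_of_eq e2)
    have hfin : (86400:ℝ) * P / δ^2 = 14400 * P / δ^2 + 14400 * P / δ^2
        + (14400 * P / δ^2 + 14400 * P / δ^2 + (14400 * P / δ^2 + 14400 * P / δ^2)) := by
      ring
    rw [hfin]
    linarith [A1, A2, A3, A4, A5, A6]
  -- conclude in ℝ≥0∞
  rw [hvol, Fin.prod_univ_three,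
    ← ENNReal.ofReal_mul (by linarith [hr 0] : (0:ℝ) ≤ 2 * r 0),
    ← ENNReal.ofReal_mul (by nlinarith [hr 0, hr 1] : (0:ℝ) ≤ 2 * r 0 * (2 * r 1)),
    ← ENNReal.ofReal_mul (by positivity : (0:ℝ) ≤ 100000 * δ⁻¹ ^ 2)]
  rw [show ((S.ncard : ℕ) : ℝ≥0∞) = ENNReal.ofReal ((S.ncard : ℕ) : ℝ) by
    rw [ENNReal.ofReal_natCast]]
  apply ENNReal.ofReal_le_ofReal
  have hfinal : 86400 * P / δ^2 ≤ 100000 * δ⁻¹ ^ 2 * (2 * r 0 * (2 * r 1) * (2 * r 2)) := by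
    have hPpos : 0 < P := mul_pos (hr 0) (mul_pos (hr 1) (hr 2))
    have heq : (100000:ℝ) * δ⁻¹ ^ 2 * (2 * r 0 * (2 * r 1) * (2 * r 2))
        = 800000 * P / δ^2 := by
      rw [hP]
      field_simp
      ring
    rw [heq, div_le_div_iff₀ hδ2 hδ2]
    nlinarith [mul_pos hPpos hδ2]
  exact hsum6.trans hfinal
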